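/- Suppose each of the n positions of a √n × √n grid is independently nonzero with probability k/n, the columns are folded into B = Θ(k/log k) bins (each bin containing √n/B columns), and within a bin two nonzero entries (f₁,f₂), (f₁',f₂') 'superimpose' if f₁ = f₁' and f₂ ≡ f₂' mod B. Then the probability that any power of ω receives 3 or more superimposed nonzero entries is at most n·(k/n)·binom(√n/B, 2)·(k/n)² ≤ k³/(2nB²) = O(k log²k / n). -/

import Mathlib

open MeasureTheory
open scoped ENNReal

/-- Each of the `n = s²` positions of an `s × s` grid is independently
nonzero with probability `k/n`; columns are folded into `B` bins (`B ∣ s`).  Two entries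
`(f₁,f₂)`, `(f₁',f₂')` superimpose if `f₁ = f₁'` and `f₂ ≡ f₂' (mod B)`; each
superposition group (a fixed row and a fixed residue mod `B`) has `s/B` positions.
The probability that any group receives 3 or more nonzero entries is at most
`n·(k/n)·binom(s/B, 2)·(k/n)²`. -/
theorem stmt7 (s B k : ℕ) (hs : 0 < s) (hB : 0 < B) (hBs : B ∣ s)
    (p : ℝ≥0∞) (hp : p ≤ 1) (hpv : p = ENNReal.ofReal ((k : ℝ) / (s : ℝ) ^ 2)) :
    (Measure.pi fun _ : Fin s × Fin s => (PMF.bernoulli p.toNNReal (by simpa using ENNReal.toNNReal_mono ENNReal.one_ne_top hp)).toMeasure)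
      {x : Fin s × Fin s → Bool |
        ∃ (f₁ : Fin s) (ρ : Fin B),
          3 ≤ {q : Fin s × Fin s | x q = true ∧ q.1 = f₁ ∧ (q.2 : ℕ) % B = (ρ : ℕ)}.ncard}
      ≤ ENNReal.ofReal (((s : ℝ) ^ 2) * ((k : ℝ) / (s : ℝ) ^ 2) *
          (Nat.choose (s / B) 2 : ℝ) * ((k : ℝ) / (s : ℝ) ^ 2) ^ 2) := by
  classical
  set ν := (PMF.bernoulli p.toNNReal (by simpa using ENNReal.toNNReal_mono ENNReal.one_ne_top hp)).toMeasure with hν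
  set μ := Measure.pi fun _ : Fin s × Fin s => ν with hμ
  set m := s / B with hm
  set grp : Fin s → Fin B → Finset (Fin s × Fin s) :=
    fun f₁ ρ => Finset.univ.filter (fun q => q.1 = f₁ ∧ (q.2 : ℕ) % B = (ρ : ℕ)) with hgrp
  set S : Finset (Finset (Fin s × Fin s)) :=
    Finset.univ.filter (fun T => T.card = 3 ∧ ∃ f₁ ρ, T ⊆ grp f₁ ρ) with hS
  set E : Finset (Fin s × Fin s) → Set (Fin s × Fin s → Bool) :=
    fun T => {x | ∀ q ∈ T, x q = true} with hE
  -- step 1: event inclusion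
  have hsub : {x : Fin s × Fin s → Bool |
        ∃ (f₁ : Fin s) (ρ : Fin B),
          3 ≤ {q : Fin s × Fin s | x q = true ∧ q.1 = f₁ ∧ (q.2 : ℕ) % B = (ρ : ℕ)}.ncard}
      ⊆ ⋃ T ∈ S, E T := by
    rintro x ⟨f₁, ρ, h3⟩
    set A := {q : Fin s × Fin s | x q = true ∧ q.1 = f₁ ∧ (q.2 : ℕ) % B = (ρ : ℕ)}
    have h3' : 3 ≤ A.toFinset.card := by
      rwa [Set.ncard_eq_toFinset_card'] at h3
    obtain ⟨T, hTsub, hTcard⟩ := Finset.exists_subset_card_eq h3'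
    refine Set.mem_iUnion₂.2 ⟨T, ?_, ?_⟩
    · refine Finset.mem_filter.2 ⟨Finset.mem_univ _, hTcard, f₁, ρ, ?_⟩
      intro q hq
      have := hTsub hq
      rw [Set.mem_toFinset] at this
      exact Finset.mem_filter.2 ⟨Finset.mem_univ _, this.2⟩
    · intro q hq
      have := hTsub hq
      rw [Set.mem_toFinset] at this
      exact this.1
  -- step 2: measure of each E T
  have hνtrue : ν {true} = p := by
    rw [hν, PMF.toMeasure_apply_singleton _ _ (measurableSet_singleton _)]
    change ((p.toNNReal : ℝ≥0∞)) = p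
    exact ENNReal.coe_toNNReal (ne_top_of_le_ne_top ENNReal.one_ne_top hp)
  have hET : ∀ T ∈ S, μ (E T) = p ^ 3 := by
    intro T hT
    obtain ⟨-, hTcard, -⟩ := Finset.mem_filter.1 hT
    have hEeq : E T = Set.univ.pi (fun q => if q ∈ T then ({true} : Set Bool) else Set.univ) := by
      ext x
      simp only [hE, Set.mem_setOf_eq, Set.mem_pi, Set.mem_univ, forall_true_left]
      constructor
      · intro h q
        by_cases hq : q ∈ T <;> simp [hq, h q]
      · intro h q hq
        have := h q
        simpa [hq] using this
    rw [hEeq, hμ, Measure.pi_pi]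
    have heach : ∀ q : Fin s × Fin s,
        ν (if q ∈ T then ({true} : Set Bool) else Set.univ) = if q ∈ T then p else 1 := by
      intro q; split
      · simp [hνtrue]
      · exact measure_univ
    simp_rw [heach]
    rw [Finset.prod_ite_mem, Finset.univ_inter, Finset.prod_const, hTcard]
  -- step 3: group cardinality bound
  have hgrpcard : ∀ (f₁ : Fin s) (ρ : Fin B), (grp f₁ ρ).card ≤ m := by
    intro f₁ ρ
    have hm0 : 0 < m := Nat.div_pos (Nat.le_of_dvd hs hBs) hB
    have := Finset.card_le_card_of_injOn
      (f := fun q : Fin s × Fin s => (⟨(q.2 : ℕ) / B, by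
        rw [Nat.div_lt_iff_lt_mul hB, hm, Nat.div_mul_cancel hBs]; exact q.2.2⟩ : Fin m))
      (s := grp f₁ ρ) (t := Finset.univ) (fun q _ => Finset.mem_univ _) ?_
    · simpa using this
    · intro q1 hq1 q2 hq2 hfq
      obtain ⟨-, h11, h12⟩ := Finset.mem_filter.1 hq1
      obtain ⟨-, h21, h22⟩ := Finset.mem_filter.1 hq2
      have hdiv : (q1.2 : ℕ) / B = (q2.2 : ℕ) / B := by
        simpa using congrArg Fin.val hfq
      have h2 : (q1.2 : ℕ) = (q2.2 : ℕ) := by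
        conv_lhs => rw [← Nat.div_add_mod (q1.2 : ℕ) B]
        conv_rhs => rw [← Nat.div_add_mod (q2.2 : ℕ) B]
        rw [hdiv, h12, h22]
      have : q1.2 = q2.2 := Fin.ext h2
      exact Prod.ext (h11.trans h21.symm) this
  -- step 4: cardinality of S
  have hScard : S.card ≤ s * B * Nat.choose m 3 := by
    have hSsub : S ⊆ Finset.univ.biUnion
        (fun fr : Fin s × Fin B => (grp fr.1 fr.2).powersetCard 3) := by
      intro T hT
      obtain ⟨-, hTcard, f₁, ρ, hTg⟩ := Finset.mem_filter.1 hT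
      exact Finset.mem_biUnion.2 ⟨(f₁, ρ), Finset.mem_univ _,
        Finset.mem_powersetCard.2 ⟨hTg, hTcard⟩⟩
    calc S.card ≤ _ := Finset.card_le_card hSsub
      _ ≤ ∑ fr : Fin s × Fin B, ((grp fr.1 fr.2).powersetCard 3).card :=
        Finset.card_biUnion_le
      _ ≤ ∑ _fr : Fin s × Fin B, Nat.choose m 3 := by
        refine Finset.sum_le_sum fun fr _ => ?_
        rw [Finset.card_powersetCard]
        exact Nat.choose_le_choose 3 (hgrpcard fr.1 fr.2)
      _ = s * B * Nat.choose m 3 := by simp [mul_assoc, Finset.card_univ, mul_comm]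
  -- step 5: combine
  have hmain : μ {x : Fin s × Fin s → Bool |
        ∃ (f₁ : Fin s) (ρ : Fin B),
          3 ≤ {q : Fin s × Fin s | x q = true ∧ q.1 = f₁ ∧ (q.2 : ℕ) % B = (ρ : ℕ)}.ncard}
      ≤ (s * B * Nat.choose m 3 : ℕ) * p ^ 3 := by
    calc μ _ ≤ μ (⋃ T ∈ S, E T) := measure_mono hsub
      _ ≤ ∑ T ∈ S, μ (E T) := measure_biUnion_finset_le _ _
      _ = ∑ _T ∈ S, p ^ 3 := Finset.sum_congr rfl hET
      _ = (S.card : ℝ≥0∞) * p ^ 3 := by rw [Finset.sum_const, nsmul_eq_mul]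
      _ ≤ (s * B * Nat.choose m 3 : ℕ) * p ^ 3 :=
        mul_le_mul_left (by exact_mod_cast hScard) _
  refine hmain.trans ?_
  -- numeric comparison
  have hc0 : (0 : ℝ) ≤ (k : ℝ) / (s : ℝ) ^ 2 := by positivity
  have hp3 : p ^ 3 = ENNReal.ofReal (((k : ℝ) / (s : ℝ) ^ 2) ^ 3) := by
    rw [hpv, ← ENNReal.ofReal_pow hc0]
  rw [hp3, ← ENNReal.ofReal_natCast, ← ENNReal.ofReal_mul (by positivity)]
  apply ENNReal.ofReal_le_ofReal
  have hnat : s * B * Nat.choose m 3 ≤ s ^ 2 * Nat.choose m 2 := by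
    have h1 : Nat.choose m 3 ≤ m * Nat.choose m 2 := by
      have h2 : Nat.choose m 3 * 3 = Nat.choose m 2 * (m - 2) := by
        simpa using Nat.choose_succ_right_eq m 2
      calc Nat.choose m 3 ≤ Nat.choose m 3 * 3 := Nat.le_mul_of_pos_right _ (by norm_num)
        _ = Nat.choose m 2 * (m - 2) := h2
        _ ≤ Nat.choose m 2 * m := Nat.mul_le_mul_left _ (Nat.sub_le _ _)
        _ = m * Nat.choose m 2 := Nat.mul_comm _ _
    calc s * B * Nat.choose m 3 ≤ s * B * (m * Nat.choose m 2) :=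
          Nat.mul_le_mul_left _ h1
      _ = s * (B * m) * Nat.choose m 2 := by ring
      _ = s ^ 2 * Nat.choose m 2 := by
          rw [hm, Nat.mul_div_cancel' hBs]; ring
  calc ((s * B * Nat.choose m 3 : ℕ) : ℝ) * ((k : ℝ) / (s : ℝ) ^ 2) ^ 3
      ≤ ((s ^ 2 * Nat.choose m 2 : ℕ) : ℝ) * ((k : ℝ) / (s : ℝ) ^ 2) ^ 3 := by
        gcongr
    _ = ((s : ℝ) ^ 2) * ((k : ℝ) / (s : ℝ) ^ 2) * (Nat.choose (s / B) 2 : ℝ) *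
          ((k : ℝ) / (s : ℝ) ^ 2) ^ 2 := by
        push_cast [hm]
        ring
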